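/- Let X be a set with ternary operation [ ] satisfying LN and RN, and p, k ≥ 0. Then the full truncated differential ∂ₙ^{(p,k)} = Σ_{i=p}^{n−k} (−1)ⁱ (dᵢⁿ'ᴸ − dᵢⁿ'ᴿ) maps the degenerate submodule Cₙ^{(p,k),D}(X,[ ]) into Cₙ₋₁^{(p,k),D}(X,[ ]), so the degenerate chains form a subcomplex. -/

import Mathlib

universe u
variable {X : Type u}

open Fin.NatCast in
/-- Substitution: replace the `i`-th entry `xᵢ` of the tuple by `[xᵢ₋₁ xᵢ xᵢ₊₁]`. -/
def subst (t : X → X → X → X) (n i : ℕ) (x : Fin (n + 2) → X) : Fin (n + 2) → X :=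
  Function.update x (i : Fin (n + 2))
    (t (x ((i : Fin (n + 2)) - 1)) (x (i : Fin (n + 2))) (x ((i : Fin (n + 2)) + 1)))

/-- Left face maps `dᵢⁿ'ᴸ` on tuples. -/
def dL (t : X → X → X → X) (n : ℕ) : ℕ → (Fin (n + 2) → X) → (Fin (n + 1) → X)
  | 0, x => fun j => x j.succ
  | i + 1, x => dL t n i (subst t n (i + 1) x)

/-- Auxiliary for right face maps: `dRa t n m = d_{n-m}ⁿ'ᴿ`. -/
def dRa (t : X → X → X → X) (n : ℕ) : ℕ → (Fin (n + 2) → X) → (Fin (n + 1) → X)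
  | 0, x => fun j => x j.castSucc
  | m + 1, x => dRa t n m (subst t n (n - m) x)

/-- Right face maps `dᵢⁿ'ᴿ` on tuples. -/
def dR (t : X → X → X → X) (n i : ℕ) : (Fin (n + 2) → X) → (Fin (n + 1) → X) :=
  dRa t n (n - i)

/-- Left face maps on the free module `Cₙ = R⟨X^{n+2}⟩`. -/
noncomputable def dLhat (R : Type*) [CommRing R] (t : X → X → X → X) (n i : ℕ) :
    ((Fin (n + 2) → X) →₀ R) →ₗ[R] ((Fin (n + 1) → X) →₀ R) :=
  Finsupp.lmapDomain R R (dL t n i)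

/-- Right face maps on the free module `Cₙ = R⟨X^{n+2}⟩`. -/
noncomputable def dRhat (R : Type*) [CommRing R] (t : X → X → X → X) (n i : ℕ) :
    ((Fin (n + 2) → X) →₀ R) →ₗ[R] ((Fin (n + 1) → X) →₀ R) :=
  Finsupp.lmapDomain R R (dR t n i)

open Fin.NatCast in
/-- The `(p,k)`-degenerate submodule `Cₙ^{(p,k),D}`: spanned by tuples with a
degenerate consecutive triple at positions `i, i+1, i+2` for some `p ≤ i`
with `i + 2 ≤ n + 1 − k`. -/
noncomputable def Cdeg (R : Type*) [CommRing R] (t : X → X → X → X) (p k n : ℕ) :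
    Submodule R ((Fin (n + 2) → X) →₀ R) :=
  Submodule.span R {f | ∃ x : Fin (n + 2) → X, ∃ i : ℕ, p ≤ i ∧ i + 2 + k ≤ n + 1 ∧
    x (↑(i + 1)) = t (x ↑i) (x ↑(i + 1)) (x ↑(i + 2)) ∧ f = Finsupp.single x 1}

open Fin.NatCast

section helpers
variable {K : ℕ}

lemma fin_cast_ne [NeZero K] {a b : ℕ} (ha : a < K) (hb : b < K) (h : a ≠ b) :
    (a : Fin K) ≠ (b : Fin K) := by
  intro hh
  apply h
  have := congrArg Fin.val hh
  rwa [Fin.val_cast_of_lt ha, Fin.val_cast_of_lt hb] at this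

lemma fin_cast_sub_one [NeZero K] (j : ℕ) :
    ((↑(j+1) : Fin K) - 1) = (j : Fin K) := by
  push_cast
  exact add_sub_cancel_right _ 1

lemma fin_cast_add_one [NeZero K] (j : ℕ) :
    ((↑j : Fin K) + 1) = (↑(j+1) : Fin K) := by
  push_cast
  rfl

lemma fin_succ_cast {N r : ℕ} (h : r < N+1) :
    ((r : Fin (N+1)).succ) = ((r+1 : ℕ) : Fin (N+2)) := by
  apply Fin.ext
  rw [Fin.val_succ, Fin.val_cast_of_lt h, Fin.val_cast_of_lt (by omega : r+1 < N+2)]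

lemma fin_castSucc_cast {N r : ℕ} (h : r < N+1) :
    ((r : Fin (N+1)).castSucc) = ((r : ℕ) : Fin (N+2)) := by
  apply Fin.ext
  rw [Fin.coe_castSucc, Fin.val_cast_of_lt h, Fin.val_cast_of_lt (by omega : r < N+2)]

end helpers

section vals
variable (t : X → X → X → X) {N : ℕ}

lemma subst_apply_ne {m r : ℕ} (hm : m < N+2) (hr : r < N+2) (hne : r ≠ m)
    (x : Fin (N+2) → X) : subst t N m x ↑r = x ↑r := by
  unfold subst
  exact Function.update_of_ne (fin_cast_ne hr hm hne) _ _

lemma subst_apply_self {m : ℕ} (hm1 : 1 ≤ m) (hm : m ≤ N+1) (x : Fin (N+2) → X) :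
    subst t N m x ↑m = t (x ↑(m-1)) (x ↑m) (x ↑(m+1)) := by
  obtain ⟨m', rfl⟩ : ∃ m', m = m' + 1 := ⟨m - 1, by omega⟩
  unfold subst
  rw [Function.update_self, fin_cast_sub_one, fin_cast_add_one]
  simp

lemma subst_self {j : ℕ} (x : Fin (N+2) → X)
    (hx : x ↑(j+1) = t (x ↑j) (x ↑(j+1)) (x ↑(j+2))) :
    subst t N (j+1) x = x := by
  unfold subst
  rw [fin_cast_sub_one, fin_cast_add_one, ← hx]
  exact Function.update_eq_self _ _

lemma dL_succ_def (i : ℕ) (x : Fin (N+2) → X) :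
    dL t N (i+1) x = dL t N i (subst t N (i+1) x) := rfl

lemma dRa_succ_def (m : ℕ) (x : Fin (N+2) → X) :
    dRa t N (m+1) x = dRa t N m (subst t N (N - m) x) := rfl

end vals

section vals2
variable (t : X → X → X → X) {N : ℕ}

lemma dL_high {i r : ℕ} (hir : i ≤ r) (hrN : r ≤ N) (x : Fin (N+2) → X) :
    dL t N i x ↑r = x ↑(r+1) := by
  induction i generalizing x with
  | zero =>
    show x (↑r : Fin (N+1)).succ = _
    rw [fin_succ_cast (by omega)]
  | succ i ih =>
    rw [dL_succ_def, ih (by omega),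
      subst_apply_ne t (by omega) (by omega) (by omega)]

lemma dL_low {i r : ℕ} (hri : r < i) (hiN : i ≤ N) (x : Fin (N+2) → X) :
    dL t N i x ↑r = t (x ↑r) (x ↑(r+1)) (dL t N i x ↑(r+1)) := by
  induction i generalizing x with
  | zero => omega
  | succ i ih =>
    rcases Nat.lt_or_ge r i with h | h
    · rw [dL_succ_def, ih h (by omega),
        subst_apply_ne t (by omega) (by omega) (by omega),
        subst_apply_ne t (by omega) (by omega) (by omega)]
    · have hr : r = i := by omega
      subst hr
      rw [dL_succ_def, dL_high t le_rfl (by omega),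
        subst_apply_self t (by omega) (by omega),
        dL_high t (by omega) (by omega),
        subst_apply_ne t (by omega) (by omega) (by omega), Nat.add_sub_cancel]

lemma dRa_low {m r : ℕ} (hm : m ≤ N) (hr : r ≤ N - m) (x : Fin (N+2) → X) :
    dRa t N m x ↑r = x ↑r := by
  induction m generalizing x with
  | zero =>
    show x (↑r : Fin (N+1)).castSucc = _
    rw [fin_castSucc_cast (by omega)]
  | succ m ih =>
    rw [dRa_succ_def, ih (by omega) (by omega),
      subst_apply_ne t (by omega) (by omega) (by omega)]

lemma dRa_high {m r : ℕ} (hm : m ≤ N) (hr1 : N - m < r) (hr2 : r ≤ N)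
    (x : Fin (N+2) → X) :
    dRa t N m x ↑r = t (dRa t N m x ↑(r-1)) (x ↑r) (x ↑(r+1)) := by
  induction m generalizing x with
  | zero => omega
  | succ m ih =>
    rcases Nat.lt_or_ge (N - m) r with h | h
    · rw [dRa_succ_def, ih (by omega) h,
        subst_apply_ne t (by omega) (by omega) (by omega),
        subst_apply_ne t (by omega) (by omega) (by omega)]
    · have hr : r = N - m := by omega
      subst hr
      rw [dRa_succ_def,
        dRa_low (m := m) (r := N - m) t (by omega) le_rfl,
        subst_apply_self t (by omega) (by omega),
        dRa_low (m := m) (r := N - m - 1) t (by omega) (by omega),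
        subst_apply_ne t (by omega) (by omega) (by omega)]

lemma dR_low {i r : ℕ} (hi : i ≤ N + 1) (hr : r ≤ i) (hrN : r ≤ N)
    (x : Fin (N+2) → X) : dR t N i x ↑r = x ↑r := by
  rcases Nat.lt_or_ge N i with h | h
  · -- i ≥ N+1 : dR = dRa 0
    have : N - i = 0 := by omega
    rw [dR, this]
    show x (↑r : Fin (N+1)).castSucc = _
    rw [fin_castSucc_cast (by omega)]
  · exact dRa_low t (by omega) (by omega) x

lemma dR_high {i r : ℕ} (hir : i < r) (hrN : r ≤ N) (x : Fin (N+2) → X) :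
    dR t N i x ↑r = t (dR t N i x ↑(r-1)) (x ↑r) (x ↑(r+1)) := by
  exact dRa_high t (by omega) (by omega) hrN x

end vals2

section cancel
variable (t : X → X → X → X) {N : ℕ}

lemma dL_cancel {j : ℕ} (x : Fin (N+2) → X)
    (hx : x ↑(j+1) = t (x ↑j) (x ↑(j+1)) (x ↑(j+2))) :
    dL t N (j+1) x = dL t N j x := by
  rw [dL_succ_def, subst_self t x hx]

lemma dR_cancel {j : ℕ} (hj : j + 1 ≤ N) (x : Fin (N+2) → X)
    (hx : x ↑(j+1) = t (x ↑j) (x ↑(j+1)) (x ↑(j+2))) :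
    dR t N j x = dR t N (j+1) x := by
  unfold dR
  rw [show N - j = (N - (j+1)) + 1 from by omega, dRa_succ_def,
    show N - (N - (j+1)) = j + 1 from by omega, subst_self t x hx]

end cancel

/-- If the ternary operation satisfies LN and RN, the full
truncated differential `∂ₙ^{(p,k)} = Σ_{i=p}^{n−k} (−1)ⁱ (dᵢⁿ'ᴸ − dᵢⁿ'ᴿ)`
maps `Cₙ^{(p,k),D}` into `Cₙ₋₁^{(p,k),D}`; the degenerate chains form a
subcomplex. -/
theorem stmt12 (R : Type*) [CommRing R] (t : X → X → X → X)
    (hLN : ∀ a b c d, t a b (t b c d) = t a (t a b c) (t (t a b c) c d))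
    (hRN : ∀ a b c d, t (t a b c) c d = t (t a b (t b c d)) (t b c d) d)
    (p k : ℕ) :
    ∀ n : ℕ,
      (Cdeg R t p k (n + 1)).map
          (∑ i ∈ Finset.Icc p (n + 1),
            if i + k ≤ n + 1 then
              ((-1 : R) ^ i) • (dLhat R t (n + 1) i - dRhat R t (n + 1) i)
            else 0)
        ≤ Cdeg R t p k n := by
  intro n
  rw [Cdeg, Submodule.map_span_le]
  rintro f ⟨x, j, hpj, hjk, hx, rfl⟩
  rw [LinearMap.sum_apply]
  set g : ℕ → ((Fin (n + 2) → X) →₀ R) := fun i =>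
    (if i + k ≤ n + 1 then
        ((-1 : R) ^ i) • (dLhat R t (n + 1) i - dRhat R t (n + 1) i)
      else 0) (Finsupp.single x 1) with hg
  show ∑ i ∈ Finset.Icc p (n+1), g i ∈ Cdeg R t p k n
  have happ : ∀ i, i + k ≤ n + 1 → g i = ((-1 : R) ^ i) •
      (Finsupp.single (dL t (n+1) i x) (1:R) - Finsupp.single (dR t (n+1) i x) 1) := by
    intro i hi
    rw [hg]
    simp only [if_pos hi, LinearMap.smul_apply, LinearMap.sub_apply, dLhat, dRhat,
      Finsupp.lmapDomain_apply, Finsupp.mapDomain_single]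
  have hjmem : j ∈ Finset.Icc p (n+1) := by
    rw [Finset.mem_Icc]; omega
  have hj1mem : j + 1 ∈ (Finset.Icc p (n+1)).erase j := by
    rw [Finset.mem_erase, Finset.mem_Icc]; omega
  rw [← Finset.add_sum_erase _ g hjmem, ← Finset.add_sum_erase _ g hj1mem, ← add_assoc]
  have hcancel : g j + g (j+1) = 0 := by
    rw [happ j (by omega), happ (j+1) (by omega), dL_cancel t x hx,
      ← dR_cancel t (by omega) x hx, pow_succ, mul_neg_one, neg_smul, add_neg_cancel]
  rw [hcancel, zero_add]
  apply Submodule.sum_mem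
  intro i hi
  rw [Finset.mem_erase, Finset.mem_erase, Finset.mem_Icc] at hi
  obtain ⟨hij1, hij, hpi, hin⟩ := hi
  by_cases hik : i + k ≤ n + 1
  · rw [happ i hik]
    apply Submodule.smul_mem
    apply sub_mem
    · -- dL term
      apply Submodule.subset_span
      rcases Nat.lt_or_ge i j with hlt | hge
      · -- i < j : degenerate at j - 1
        obtain ⟨j', rfl⟩ : ∃ j', j = j' + 1 := ⟨j - 1, by omega⟩
        refine ⟨_, j', by omega, by omega, ?_, rfl⟩
        rw [dL_high t (by omega : i ≤ j'+1) (by omega),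
          dL_high t (by omega : i ≤ j') (by omega),
          dL_high t (by omega : i ≤ j'+2) (by omega),
          show j'+1+1 = j'+2 from by omega, show j'+2+1 = j'+3 from by omega]
        rw [show j'+1+1 = j'+2 from by omega, show j'+1+2 = j'+3 from by omega] at hx
        exact hx
      · -- i ≥ j + 2
        have hge2 : j + 2 ≤ i := by omega
        refine ⟨_, j, hpj, by omega, ?_, rfl⟩
        have e2 : dL t (n+1) i x ↑(j+1) = t (x ↑(j+1)) (x ↑(j+2))
            (dL t (n+1) i x ↑(j+2)) := by
          rw [dL_low t (by omega : j+1 < i) (by omega),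
            show j+1+1 = j+2 from by omega]
        have e1 : dL t (n+1) i x ↑j = t (x ↑j) (x ↑(j+1)) (dL t (n+1) i x ↑(j+1)) :=
          dL_low t (by omega) (by omega) x
        rw [e1, e2]
        have h := hRN (x ↑j) (x ↑(j+1)) (x ↑(j+2)) (dL t (n+1) i x ↑(j+2))
        rw [← hx] at h
        exact h
    · -- dR term
      apply Submodule.subset_span
      rcases Nat.lt_or_ge i j with hlt | hge
      · -- i < j : degenerate at j - 1
        obtain ⟨j', rfl⟩ : ∃ j', j = j' + 1 := ⟨j - 1, by omega⟩
        refine ⟨_, j', by omega, by omega, ?_, rfl⟩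
        have e1 : dR t (n+1) i x ↑(j'+1) = t (dR t (n+1) i x ↑j') (x ↑(j'+1))
            (x ↑(j'+2)) := by
          rw [dR_high t (by omega : i < j'+1) (by omega), Nat.add_sub_cancel,
            show j'+1+1 = j'+2 from by omega]
        have e2 : dR t (n+1) i x ↑(j'+2) = t (dR t (n+1) i x ↑(j'+1)) (x ↑(j'+2))
            (x ↑(j'+3)) := by
          rw [dR_high t (by omega : i < j'+2) (by omega),
            show j'+2-1 = j'+1 from by omega, show j'+2+1 = j'+3 from by omega]
        rw [e2, e1]
        have h := hLN (dR t (n+1) i x ↑j') (x ↑(j'+1)) (x ↑(j'+2)) (x ↑(j'+3))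
        rw [show j'+1+1 = j'+2 from by omega, show j'+1+2 = j'+3 from by omega] at hx
        rw [← hx] at h
        exact h
      · -- i ≥ j + 2
        have hge2 : j + 2 ≤ i := by omega
        refine ⟨_, j, hpj, by omega, ?_, rfl⟩
        rw [dR_low t (by omega) (by omega : j+1 ≤ i) (by omega),
          dR_low t (by omega) (by omega : j ≤ i) (by omega),
          dR_low t (by omega) (by omega : j+2 ≤ i) (by omega)]
        exact hx
  · have : g i = 0 := by rw [hg]; simp only [if_neg hik, LinearMap.zero_apply]
    rw [this]
    exact Submodule.zero_mem _
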